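/- For any real symmetric n×n matrix C with 0 ⪯ C ⪯ I and any η ≥ 0: exp(−η C) ⪯ I − C·(1 − exp(−η)), where the left side is the matrix exponential and exp(−η) on the right is the scalar exponential. -/

import Mathlib

open Matrix

lemma scalar_ineq (x η : ℝ) (hx0 : 0 ≤ x) (hx1 : x ≤ 1) :
    0 ≤ 1 - (1 - Real.exp (-η)) * x - Real.exp (-η * x) := by
  have h := convexOn_exp.2 (Set.mem_univ (0 : ℝ)) (Set.mem_univ (-η))
    (by linarith : (0:ℝ) ≤ 1 - x) hx0 (by ring)
  simp only [smul_eq_mul, mul_zero, zero_add, Real.exp_zero, mul_one] at h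
  have : x * -η = -η * x := by ring
  rw [this] at h
  nlinarith [h]

theorem stmt_12 (n : ℕ) (C : Matrix (Fin n) (Fin n) ℝ)
    (hCs : C.IsSymm) (hC0 : C.PosSemidef)
    (hC1 : ((1 : Matrix (Fin n) (Fin n) ℝ) - C).PosSemidef)
    (η : ℝ) (hη : 0 ≤ η) :
    ((1 : Matrix (Fin n) (Fin n) ℝ) - (1 - Real.exp (-η)) • C
      - NormedSpace.exp ((-η) • C)).PosSemidef := by
  have hC := hC0.1
  set U : Matrix (Fin n) (Fin n) ℝ := (hC.eigenvectorUnitary : Matrix (Fin n) (Fin n) ℝ) with hU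
  set ev := hC.eigenvalues with hev
  -- eigenvalue bounds
  have hev0 : ∀ i, 0 ≤ ev i := fun i => hC0.eigenvalues_nonneg i
  have hev1 : ∀ i, ev i ≤ 1 := by
    intro i
    have h1 : (1 : ℝ) - ev i ∈ spectrum ℝ ((1 : Matrix (Fin n) (Fin n) ℝ) - C) := by
      have hmem : ev i ∈ spectrum ℝ C := hC.eigenvalues_mem_spectrum_real i
      have h := spectrum.singleton_sub_eq C (1 : ℝ)
      rw [_root_.map_one] at h
      rw [← h]
      exact Set.sub_mem_sub (Set.mem_singleton _) hmem
    rw [hC1.isHermitian.spectrum_real_eq_range_eigenvalues] at h1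
    obtain ⟨j, hj⟩ := h1
    have := hC1.eigenvalues_nonneg j
    rw [hj] at this
    linarith
  -- spectral theorem
  have hspec : C = U * diagonal ev * star U := by
    have := hC.spectral_theorem
    simpa using this
  have hUU : U * star U = 1 := (Matrix.mem_unitaryGroup_iff).mp hC.eigenvectorUnitary.2
  have hUU' : star U * U = 1 := (Matrix.mem_unitaryGroup_iff').mp hC.eigenvectorUnitary.2
  -- the unit
  set Uu : (Matrix (Fin n) (Fin n) ℝ)ˣ := ⟨U, star U, hUU, hUU'⟩ with hUu
  have hUinv : (↑Uu⁻¹ : Matrix (Fin n) (Fin n) ℝ) = star U := rfl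
  -- exponential of the conjugated diagonal
  have hexp : NormedSpace.exp ((-η) • C)
      = U * diagonal (fun i => Real.exp (-η * ev i)) * star U := by
    have h1 : (-η) • C = (Uu : Matrix (Fin n) (Fin n) ℝ) * ((-η) • diagonal ev)
        * ((Uu⁻¹ : (Matrix (Fin n) (Fin n) ℝ)ˣ) : Matrix (Fin n) (Fin n) ℝ) := by
      rw [hUinv]
      show (-η) • C = U * ((-η) • diagonal ev) * star U
      rw [hspec, mul_smul_comm, smul_mul_assoc]
    rw [h1, Matrix.exp_units_conj, hUinv]
    congr 2
    rw [← Matrix.diagonal_smul, Matrix.exp_diagonal]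
    congr 1
    funext i
    rw [Pi.exp_def]
    simp [Real.exp_eq_exp_ℝ]
  -- rewrite the goal as a conjugation of a diagonal matrix
  have key : (1 : Matrix (Fin n) (Fin n) ℝ) - (1 - Real.exp (-η)) • C
      - NormedSpace.exp ((-η) • C)
      = U * diagonal (fun i => 1 - (1 - Real.exp (-η)) * ev i - Real.exp (-η * ev i)) * star U := by
    symm
    have hd : diagonal (fun i => 1 - (1 - Real.exp (-η)) * ev i - Real.exp (-η * ev i))
        = (1 : Matrix (Fin n) (Fin n) ℝ) - (1 - Real.exp (-η)) • diagonal ev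
          - diagonal (fun i => Real.exp (-η * ev i)) := by
      rw [← Matrix.diagonal_smul,
        show (1 : Matrix (Fin n) (Fin n) ℝ) = diagonal (fun _ => (1:ℝ)) by simp,
        ← Matrix.diagonal_sub, ← Matrix.diagonal_sub]
      simp [Pi.smul_def]
    rw [hd, Matrix.mul_sub, Matrix.mul_sub, Matrix.sub_mul, Matrix.sub_mul, mul_one, hUU,
      mul_smul_comm, smul_mul_assoc, ← hspec, ← hexp]
  rw [key]
  have hdiag : (diagonal
      (fun i => 1 - (1 - Real.exp (-η)) * ev i - Real.exp (-η * ev i))).PosSemidef := by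
    rw [Matrix.posSemidef_diagonal_iff]
    intro i
    exact scalar_ineq (ev i) η (hev0 i) (hev1 i)
  have : star U = Uᴴ := rfl
  rw [this]
  exact hdiag.mul_mul_conjTranspose_same U
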